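/- arXiv:math/0603711 — 5 statements merged into one kernel-verified Lean document; each statement's English description precedes it below -/
import Mathlib

section
/- Projection property of two-scale limit measures: Let Ω ⊆ ℝ^d be a bounded open set, □ = [0,1)^d, let ε_h → 0⁺ and let (u_h) be a bounded sequence in L¹(Ω, ℝ^m). For each h let ν̂_h be the pushforward of Lebesgue measure restricted to Ω under the map x ↦ (x, ⟨x/ε_h⟩, u_h(x)) ∈ ℝ^d × ℝ^d × ℝ^m. If a subsequence (ν̂_{h_i}) converges weakly to a finite measure ν̂ (i.e., ∫ φ dν̂_{h_i} → ∫ φ dν̂ for every bounded continuous φ : ℝ^d × ℝ^d × ℝ^m → ℝ), then for every Borel set S ⊆ ℝ^d × ℝ^d one has ν̂(S × ℝ^m) = |S ∩ (Ω × □)|, the Lebesgue measure of S ∩ (Ω × □). -/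
open MeasureTheory Filter Topology Metric Set
open scoped ENNReal

noncomputable section

def unitCell (d : ℕ) : Set (Fin d → ℝ) := Set.univ.pi fun _ => Set.Ico (0 : ℝ) 1

def fracPart {d : ℕ} (x : Fin d → ℝ) : Fin d → ℝ := fun i => Int.fract (x i)

namespace TwoScaleAux

variable {d : ℕ}

lemma measurableSet_unitCell : MeasurableSet (unitCell d) :=
  MeasurableSet.univ_pi fun _ => measurableSet_Ico

lemma volume_unitCell : volume (unitCell d) = 1 := by
  rw [unitCell, volume_pi_pi]; simp

lemma measurable_fracPart : Measurable (fracPart (d := d)) :=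
  measurable_pi_lambda _ fun i => measurable_fract.comp (measurable_pi_apply i)

lemma norm_le_one_of_mem_unitCell {y : Fin d → ℝ} (hy : y ∈ unitCell d) : ‖y‖ ≤ 1 := by
  rw [pi_norm_le_iff_of_nonneg zero_le_one]
  intro i
  have := hy i (mem_univ i)
  rw [Real.norm_eq_abs, abs_le]
  constructor <;> [linarith [this.1]; linarith [this.2]]

/-- The half-open cube of side `ε` indexed by `k ∈ ℤ^d`. -/
def cube (ε : ℝ) (k : Fin d → ℤ) : Set (Fin d → ℝ) := {x | ∀ i, ⌊ε⁻¹ * x i⌋ = k i}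

lemma mem_cube_self (ε : ℝ) (x : Fin d → ℝ) : x ∈ cube ε (fun i => ⌊ε⁻¹ * x i⌋) :=
  fun _ => rfl

lemma cube_disjoint {ε : ℝ} {k k' : Fin d → ℤ} (h : k ≠ k') :
    Disjoint (cube ε k) (cube ε k') := by
  rw [Set.disjoint_left]
  rintro x hx hx'
  exact h (funext fun i => (hx i).symm.trans (hx' i))

lemma cube_eq_pi {ε : ℝ} (hε : 0 < ε) (k : Fin d → ℤ) :
    cube ε k = Set.univ.pi fun i => Set.Ico (ε * k i) (ε * (k i + 1)) := by
  ext x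
  simp only [cube, mem_setOf_eq, Set.mem_pi, mem_univ, true_implies, mem_Ico]
  refine forall_congr' fun i => ?_
  rw [Int.floor_eq_iff]
  constructor
  · rintro ⟨h1, h2⟩
    constructor
    · have := (mul_le_mul_iff_right₀ hε).2 h1
      rwa [mul_inv_cancel_left₀ hε.ne'] at this
    · have := (mul_lt_mul_iff_right₀ hε).2 h2
      rw [mul_inv_cancel_left₀ hε.ne'] at this
      exact_mod_cast this
      -- might fail; fix later
  · rintro ⟨h1, h2⟩
    constructor
    · have := (mul_le_mul_iff_right₀ (inv_pos.2 hε)).2 h1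
      rwa [inv_mul_cancel_left₀ hε.ne'] at this
    · have := (mul_lt_mul_iff_right₀ (inv_pos.2 hε)).2 h2
      rwa [inv_mul_cancel_left₀ hε.ne'] at this

lemma measurableSet_cube {ε : ℝ} (hε : 0 < ε) (k : Fin d → ℤ) :
    MeasurableSet (cube ε k) := by
  rw [cube_eq_pi hε]
  exact MeasurableSet.univ_pi fun _ => measurableSet_Ico

lemma volume_cube {ε : ℝ} (hε : 0 < ε) (k : Fin d → ℤ) :
    volume (cube ε k) = ENNReal.ofReal (ε ^ d) := by
  rw [cube_eq_pi hε, volume_pi_pi]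
  have h : ∀ i : Fin d, volume (Ico (ε * k i) (ε * (k i + 1))) = ENNReal.ofReal ε := by
    intro i
    rw [Real.volume_Ico]
    congr 1
    ring
  simp only [h, Finset.prod_const, Finset.card_univ, Fintype.card_fin]
  rw [← ENNReal.ofReal_pow hε.le]

lemma fracPart_eq_on_cube {ε : ℝ} {k : Fin d → ℤ} {x : Fin d → ℝ} (hx : x ∈ cube ε k) :
    fracPart (ε⁻¹ • x) = ε⁻¹ • x - fun i => (k i : ℝ) := by
  funext i
  simp only [fracPart, Pi.smul_apply, smul_eq_mul, Pi.sub_apply]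
  rw [Int.fract, hx i]

lemma preimage_cube {ε : ℝ} (hε : 0 < ε) (k : Fin d → ℤ) :
    (fun y : Fin d → ℝ => ε • y + ε • (fun i => (k i : ℝ))) ⁻¹' cube ε k = unitCell d := by
  ext y
  have h : ∀ i, ε⁻¹ * (ε * y i + ε * (k i : ℝ)) = y i + (k i : ℝ) := by
    intro i
    field_simp
  simp only [mem_preimage, cube, mem_setOf_eq, Pi.add_apply, Pi.smul_apply, smul_eq_mul, h,
    Int.floor_add_intCast, unitCell, Set.mem_pi, mem_univ, true_implies, mem_Ico, add_eq_right,
    Int.floor_eq_zero_iff]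

/-- Global change of variables under `y ↦ ε • y + b`. -/
lemma cov {ε : ℝ} (hε : 0 < ε) (b : Fin d → ℝ) (f : (Fin d → ℝ) → ℝ) :
    ∫ x, f x = ε ^ d * ∫ y, f (ε • y + b) := by
  have h := Measure.integral_comp_smul volume (fun x => f (x + b)) ε
  simp only [Module.finrank_fin_fun, integral_add_right_eq_self] at h
  rw [h, abs_of_pos (by positivity : (0:ℝ) < ((ε:ℝ) ^ d)⁻¹), smul_eq_mul]
  field_simp

/-- Change of variables mapping the unit cell onto a cube. -/
lemma cov_cube {ε : ℝ} (hε : 0 < ε) (k : Fin d → ℤ) (f : (Fin d → ℝ) → ℝ) :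
    ∫ x in cube ε k, f x
      = ε ^ d * ∫ y in unitCell d, f (ε • y + ε • (fun i => (k i : ℝ))) := by
  rw [← integral_indicator (measurableSet_cube hε k),
    ← integral_indicator (measurableSet_unitCell)]
  rw [cov hε (ε • fun i => (k i : ℝ)) ((cube ε k).indicator f)]
  congr 1
  refine integral_congr_ae (ae_of_all _ fun y => ?_)
  by_cases hy : y ∈ unitCell d
  · rw [indicator_of_mem hy]
    beta_reduce
    have : (ε • y + ε • fun i => (k i : ℝ)) ∈ cube ε k := by
      rw [← preimage_cube hε k] at hy
      exact hy
    rw [indicator_of_mem this]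
  · rw [indicator_of_notMem hy]
    beta_reduce
    have : (ε • y + ε • fun i => (k i : ℝ)) ∉ cube ε k := by
      rw [← preimage_cube hε k] at hy
      exact hy
    rw [indicator_of_notMem this]

/-- A bounded measurable function is integrable on a set of finite measure. -/
lemma integrableOn_of_bdd' {α : Type*} [MeasurableSpace α] {μ : Measure α}
    {f : α → ℝ} (hf : AEStronglyMeasurable f μ)
    {C : ℝ} (hC : ∀ x, ‖f x‖ ≤ C) {s : Set α} (hs : μ s ≠ ∞) :
    IntegrableOn f s μ := by
  haveI : IsFiniteMeasure (μ.restrict s) := by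
    constructor
    rw [Measure.restrict_apply_univ]
    exact lt_top_iff_ne_top.2 hs
  exact ⟨hf.restrict, HasFiniteIntegral.of_bounded (C := C) (ae_of_all _ hC)⟩

lemma integrableOn_of_bdd {f : (Fin d → ℝ) → ℝ} (hf : AEStronglyMeasurable f volume)
    {C : ℝ} (hC : ∀ x, ‖f x‖ ≤ C) {s : Set (Fin d → ℝ)} (hs : volume s ≠ ∞) :
    IntegrableOn f s volume := by
  haveI : IsFiniteMeasure (volume.restrict s) := by
    constructor
    rw [Measure.restrict_apply_univ]
    exact lt_top_iff_ne_top.2 hs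
  exact ⟨hf.restrict, HasFiniteIntegral.of_bounded (C := C) (ae_of_all _ hC)⟩

lemma key_est (Ω : Set (Fin d → ℝ)) (hΩm : MeasurableSet Ω) (hΩfin : volume Ω ≠ ∞)
    {R : ℝ} (hΩsub : Ω ⊆ closedBall 0 R)
    (g : BoundedContinuousFunction ((Fin d → ℝ) × (Fin d → ℝ)) ℝ)
    {δ' η : ℝ} (hδ' : 0 ≤ δ')
    (hunif : ∀ p ∈ closure Ω ×ˢ closedBall (0 : Fin d → ℝ) 1,
      ∀ q ∈ closure Ω ×ˢ closedBall (0 : Fin d → ℝ) 1,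
      dist p q < η → ‖g p - g q‖ ≤ δ')
    {ε : ℝ} (hε : 0 < ε) (hεη : ε < η) :
    ‖(∫ x in Ω, g (x, fracPart (ε⁻¹ • x)))
        - ∫ x in Ω, ∫ y in unitCell d, g (x, y)‖ ≤
      2 * δ' * (volume Ω).toReal
        + 2 * ‖g‖ * (volume (Ω ∩ cthickening ε Ωᶜ)).toReal := by
  classical
  set G : (Fin d → ℝ) → ℝ := fun x => ∫ y in unitCell d, g (x, y) with hGdef
  haveI hfm1 : IsFiniteMeasure (volume.restrict (unitCell d)) := by
    constructor
    rw [Measure.restrict_apply_univ, volume_unitCell]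
    exact ENNReal.one_lt_top
  have hucfin : volume (unitCell d) ≠ ∞ := by rw [volume_unitCell]; exact ENNReal.one_ne_top
  have hgm : Measurable (g : (Fin d → ℝ) × (Fin d → ℝ) → ℝ) := g.continuous.measurable
  have hf1m : Measurable fun x : Fin d → ℝ => g (x, fracPart (ε⁻¹ • x)) :=
    hgm.comp (measurable_id.prodMk (measurable_fracPart.comp (measurable_id.const_smul ε⁻¹)))
  have hf1b : ∀ x, ‖g (x, fracPart (ε⁻¹ • x))‖ ≤ ‖g‖ := fun x => g.norm_coe_le_norm _
  have hGsm : StronglyMeasurable G := g.continuous.stronglyMeasurable.integral_prod_right'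
  have hGb : ∀ x, ‖G x‖ ≤ ‖g‖ := by
    intro x
    have h := norm_integral_le_of_norm_le_const (μ := volume.restrict (unitCell d))
      (f := fun y => g (x, y)) (C := ‖g‖) (ae_of_all _ fun y => g.norm_coe_le_norm _)
    rwa [measureReal_restrict_apply_univ, measureReal_def, volume_unitCell, ENNReal.toReal_one, mul_one] at h
  -- the finite set of relevant cubes
  set N : ℤ := ⌈ε⁻¹ * R⌉ + 1 with hN
  have hKfin : {k : Fin d → ℤ | (cube ε k ∩ Ω).Nonempty}.Finite := by
    apply Set.Finite.subset (Set.Finite.pi fun _ : Fin d => Set.finite_Icc (-N) N)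
    rintro k ⟨x, hxc, hxΩ⟩
    intro i _
    rw [mem_Icc]
    have hxi : |x i| ≤ R := by
      have h1 : ‖x i‖ ≤ ‖x‖ := norm_le_pi_norm x i
      have h2 : ‖x‖ ≤ R := by
        have h3 := hΩsub hxΩ
        rwa [mem_closedBall, dist_zero_right] at h3
      simpa using h1.trans h2
    have hfl := hxc i
    have h3 : (k i : ℝ) ≤ ε⁻¹ * x i := by rw [← hfl]; exact Int.floor_le _
    have h4 : ε⁻¹ * x i < (k i : ℝ) + 1 := by rw [← hfl]; exact Int.lt_floor_add_one _
    have h5 : ε⁻¹ * x i ≤ ε⁻¹ * R := by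
      have := (abs_le.1 hxi).2
      exact mul_le_mul_of_nonneg_left this (inv_pos.2 hε).le
    have h6 : ε⁻¹ * (-R) ≤ ε⁻¹ * x i := by
      have := (abs_le.1 hxi).1
      exact mul_le_mul_of_nonneg_left this (inv_pos.2 hε).le
    have hceil : ε⁻¹ * R ≤ (⌈ε⁻¹ * R⌉ : ℝ) := Int.le_ceil _
    have hub : (k i : ℝ) ≤ (N : ℝ) := by push_cast [hN]; nlinarith
    have hlb : (-N : ℝ) ≤ (k i : ℝ) := by push_cast [hN]; nlinarith
    exact ⟨by exact_mod_cast hlb, by exact_mod_cast hub⟩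
  set K := hKfin.toFinset with hK
  have hcover : Ω = ⋃ k ∈ K, (cube ε k ∩ Ω) := by
    apply subset_antisymm
    · intro x hx
      have hkK : (fun i => ⌊ε⁻¹ * x i⌋) ∈ K := by
        rw [hK, Set.Finite.mem_toFinset]
        exact ⟨x, mem_cube_self ε x, hx⟩
      exact mem_biUnion hkK ⟨mem_cube_self ε x, hx⟩
    · intro x hx
      simp only [mem_iUnion] at hx
      obtain ⟨k, _, _, hx⟩ := hx
      exact hx
  have hpd : (K : Set (Fin d → ℤ)).Pairwise (Function.onFun Disjoint fun k => cube ε k ∩ Ω) := by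
    intro k _ k' _ hkk'
    exact ((cube_disjoint hkk').mono inter_subset_left inter_subset_left : _)
  have hmeask : ∀ k : Fin d → ℤ, MeasurableSet (cube ε k ∩ Ω) :=
    fun k => (measurableSet_cube hε k).inter hΩm
  have hfink : ∀ k : Fin d → ℤ, volume (cube ε k ∩ Ω) ≠ ∞ := fun k =>
    (lt_of_le_of_lt (measure_mono inter_subset_right) (lt_top_iff_ne_top.2 hΩfin)).ne
  have hvolk : ∀ k : Fin d → ℤ, volume (cube ε k ∩ Ω) ≤ volume Ω := fun k =>
    measure_mono inter_subset_right
  have hI : ∫ x in Ω, g (x, fracPart (ε⁻¹ • x))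
      = ∑ k ∈ K, ∫ x in cube ε k ∩ Ω, g (x, fracPart (ε⁻¹ • x)) := by
    conv_lhs => rw [hcover]
    exact integral_biUnion_finset K (fun k _ => hmeask k) hpd
      (fun k _ => integrableOn_of_bdd hf1m.aestronglyMeasurable hf1b (hfink k))
  have hRd : ∫ x in Ω, G x = ∑ k ∈ K, ∫ x in cube ε k ∩ Ω, G x := by
    conv_lhs => rw [hcover]
    exact integral_biUnion_finset K (fun k _ => hmeask k) hpd
      (fun k _ => integrableOn_of_bdd hGsm.aestronglyMeasurable hGb (hfink k))
  rw [hI, hRd, ← Finset.sum_sub_distrib]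
  -- generic (partial-cube) bound
  have hpartbound : ∀ k ∈ K,
      ‖(∫ x in cube ε k ∩ Ω, g (x, fracPart (ε⁻¹ • x))) - ∫ x in cube ε k ∩ Ω, G x‖
        ≤ 2 * ‖g‖ * (volume (cube ε k ∩ Ω)).toReal := by
    intro k _
    have h1 := norm_setIntegral_le_of_norm_le_const (C := ‖g‖)
      (lt_top_iff_ne_top.2 (hfink k)) (fun x _ => hf1b x)
    have h2 := norm_setIntegral_le_of_norm_le_const (C := ‖g‖)
      (lt_top_iff_ne_top.2 (hfink k)) (fun x _ => hGb x)
    calc ‖(∫ x in cube ε k ∩ Ω, g (x, fracPart (ε⁻¹ • x))) - ∫ x in cube ε k ∩ Ω, G x‖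
        ≤ ‖∫ x in cube ε k ∩ Ω, g (x, fracPart (ε⁻¹ • x))‖ + ‖∫ x in cube ε k ∩ Ω, G x‖ :=
          norm_sub_le _ _
      _ ≤ ‖g‖ * (volume (cube ε k ∩ Ω)).toReal + ‖g‖ * (volume (cube ε k ∩ Ω)).toReal :=
          add_le_add h1 h2
      _ = 2 * ‖g‖ * (volume (cube ε k ∩ Ω)).toReal := by ring
  -- full-cube bound
  have hfullbound : ∀ k ∈ K.filter (fun k => cube ε k ⊆ Ω),
      ‖(∫ x in cube ε k ∩ Ω, g (x, fracPart (ε⁻¹ • x))) - ∫ x in cube ε k ∩ Ω, G x‖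
        ≤ 2 * δ' * (volume (cube ε k ∩ Ω)).toReal := by
    intro k hk
    rw [Finset.mem_filter] at hk
    have hsub : cube ε k ⊆ Ω := hk.2
    have hQΩ : cube ε k ∩ Ω = cube ε k := inter_eq_self_of_subset_left hsub
    rw [hQΩ]
    set ckr : Fin d → ℝ := fun i => (k i : ℝ) with hckr
    set b : Fin d → ℝ := ε • ckr with hb
    have hA_mem : ∀ y ∈ unitCell d, ε • y + b ∈ cube ε k := by
      intro y hy
      rw [← preimage_cube hε k] at hy
      exact hy
    have hb_mem : b ∈ cube ε k := by
      have h0 : (0 : Fin d → ℝ) ∈ unitCell d := by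
        intro i _
        exact ⟨le_refl _, zero_lt_one⟩
      have := hA_mem 0 h0
      simpa using this
    have hball : ∀ y ∈ unitCell d, y ∈ closedBall (0 : Fin d → ℝ) 1 := by
      intro y hy
      rw [mem_closedBall, dist_zero_right]
      exact norm_le_one_of_mem_unitCell hy
    have hgd : ∀ z ∈ unitCell d, ∀ y ∈ unitCell d, ‖g (ε • z + b, y) - g (b, y)‖ ≤ δ' := by
      intro z hz y hy
      refine hunif _ ⟨subset_closure (hsub (hA_mem z hz)), hball y hy⟩
        _ ⟨subset_closure (hsub hb_mem), hball y hy⟩ ?_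
      rw [Prod.dist_eq]
      refine max_lt ?_ (by rw [dist_self]; linarith)
      have hd : dist (ε • z + b) b = ε * ‖z‖ := by
        rw [dist_eq_norm]
        simp [norm_smul, abs_of_pos hε]
      rw [hd]
      calc ε * ‖z‖ ≤ ε * 1 := mul_le_mul_of_nonneg_left (norm_le_one_of_mem_unitCell hz) hε.le
        _ < η := by linarith
    -- integrability on the unit cell
    have hmA : Measurable fun y : Fin d → ℝ => g (ε • y + b, y) :=
      hgm.comp (((measurable_id.const_smul ε).add_const b).prodMk measurable_id)
    have hmb : Measurable fun y : Fin d → ℝ => g (b, y) :=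
      hgm.comp (measurable_const.prodMk measurable_id)
    have hmGA : Measurable fun z : Fin d → ℝ => G (ε • z + b) :=
      hGsm.measurable.comp ((measurable_id.const_smul ε).add_const b)
    have hiA : IntegrableOn (fun y => g (ε • y + b, y)) (unitCell d) :=
      integrableOn_of_bdd hmA.aestronglyMeasurable (fun y => g.norm_coe_le_norm _) hucfin
    have hib : IntegrableOn (fun y => g (b, y)) (unitCell d) :=
      integrableOn_of_bdd hmb.aestronglyMeasurable (fun y => g.norm_coe_le_norm _) hucfin
    have hiGA : IntegrableOn (fun z => G (ε • z + b)) (unitCell d) :=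
      integrableOn_of_bdd hmGA.aestronglyMeasurable (fun z => hGb _) hucfin
    -- change of variables
    have e1 : ∫ x in cube ε k, g (x, fracPart (ε⁻¹ • x)) = ∫ x in cube ε k, g (x, ε⁻¹ • x - ckr) :=
      setIntegral_congr_fun (measurableSet_cube hε k)
        (fun x hx => by rw [fracPart_eq_on_cube hx])
    have e2 : ∫ x in cube ε k, g (x, ε⁻¹ • x - ckr)
        = ε ^ d * ∫ y in unitCell d, g (ε • y + b, y) := by
      rw [cov_cube hε k]
      congr 1
      refine setIntegral_congr_fun measurableSet_unitCell fun y hy => ?_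
      have hyy : ε⁻¹ • (ε • y + ε • ckr) - ckr = y := by
        funext i
        simp only [Pi.sub_apply, Pi.smul_apply, Pi.add_apply, smul_eq_mul]
        field_simp
        ring
      beta_reduce
      rw [hyy, hb]
    have e3 : ∫ x in cube ε k, G x = ε ^ d * ∫ z in unitCell d, G (ε • z + b) := by
      rw [cov_cube hε k G, hb]
    -- core estimates
    have est1 : ‖(∫ y in unitCell d, g (ε • y + b, y)) - G b‖ ≤ δ' := by
      have hsplit : (∫ y in unitCell d, g (ε • y + b, y)) - G b
          = ∫ y in unitCell d, (g (ε • y + b, y) - g (b, y)) := by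
        rw [integral_sub hiA hib]
      rw [hsplit]
      have h := norm_setIntegral_le_of_norm_le_const (C := δ')
        (lt_top_iff_ne_top.2 hucfin) (fun y hy => hgd y hy y hy)
      rwa [measureReal_def, volume_unitCell, ENNReal.toReal_one, mul_one] at h
    have est2 : ‖(∫ z in unitCell d, G (ε • z + b)) - G b‖ ≤ δ' := by
      have h0 : ∀ z ∈ unitCell d, ‖G (ε • z + b) - G b‖ ≤ δ' := by
        intro z hz
        have hiAz : IntegrableOn (fun y => g (ε • z + b, y)) (unitCell d) :=
          integrableOn_of_bdd (hgm.comp (measurable_const.prodMk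
            measurable_id)).aestronglyMeasurable (fun y => g.norm_coe_le_norm _) hucfin
        have hsplit : G (ε • z + b) - G b
            = ∫ y in unitCell d, (g (ε • z + b, y) - g (b, y)) := by
          rw [integral_sub hiAz hib]
        rw [hsplit]
        have h := norm_setIntegral_le_of_norm_le_const (C := δ')
          (lt_top_iff_ne_top.2 hucfin) (fun y hy => hgd z hz y hy)
        rwa [measureReal_def, volume_unitCell, ENNReal.toReal_one, mul_one] at h
      have hsplit : (∫ z in unitCell d, G (ε • z + b)) - G b
          = ∫ z in unitCell d, (G (ε • z + b) - G b) := by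
        rw [integral_sub hiGA (integrableOn_const hucfin)]
        congr 1
        rw [setIntegral_const, measureReal_def, volume_unitCell, ENNReal.toReal_one, one_smul]
      rw [hsplit]
      have h := norm_setIntegral_le_of_norm_le_const (C := δ')
        (lt_top_iff_ne_top.2 hucfin) h0
      rwa [measureReal_def, volume_unitCell, ENNReal.toReal_one, mul_one] at h
    have hvolQ : (volume (cube ε k)).toReal = ε ^ d := by
      rw [volume_cube hε, ENNReal.toReal_ofReal (by positivity)]
    rw [e1, e2, e3, ← mul_sub]
    rw [norm_mul, Real.norm_eq_abs, abs_of_pos (by positivity : (0:ℝ) < ε ^ d)]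
    calc ε ^ d * ‖(∫ y in unitCell d, g (ε • y + b, y)) - ∫ z in unitCell d, G (ε • z + b)‖
        ≤ ε ^ d * (2 * δ') := by
          refine mul_le_mul_of_nonneg_left ?_ (by positivity)
          calc ‖(∫ y in unitCell d, g (ε • y + b, y)) - ∫ z in unitCell d, G (ε • z + b)‖
              = ‖((∫ y in unitCell d, g (ε • y + b, y)) - G b)
                  - ((∫ z in unitCell d, G (ε • z + b)) - G b)‖ := by congr 1; ring
            _ ≤ ‖(∫ y in unitCell d, g (ε • y + b, y)) - G b‖
                  + ‖(∫ z in unitCell d, G (ε • z + b)) - G b‖ := norm_sub_le _ _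
            _ ≤ δ' + δ' := add_le_add est1 est2
            _ = 2 * δ' := by ring
      _ = 2 * δ' * (volume (cube ε k)).toReal := by rw [hvolQ]; ring
  -- summed volume bounds
  have hsum_le : ∀ s : Finset (Fin d → ℤ), s ⊆ K → ∀ T : Set (Fin d → ℝ),
      (∀ k ∈ s, cube ε k ∩ Ω ⊆ T) → volume T ≠ ∞ →
      ∑ k ∈ s, (volume (cube ε k ∩ Ω)).toReal ≤ (volume T).toReal := by
    intro s hs T hT hTfin
    have h1 : volume (⋃ k ∈ s, cube ε k ∩ Ω) = ∑ k ∈ s, volume (cube ε k ∩ Ω) :=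
      measure_biUnion_finset (hpd.mono (Finset.coe_subset.2 hs)) (fun k _ => hmeask k)
    have h2 : volume (⋃ k ∈ s, cube ε k ∩ Ω) ≤ volume T := measure_mono (iUnion₂_subset hT)
    calc ∑ k ∈ s, (volume (cube ε k ∩ Ω)).toReal
        = (∑ k ∈ s, volume (cube ε k ∩ Ω)).toReal := (ENNReal.toReal_sum fun k _ => hfink k).symm
      _ ≤ (volume T).toReal := by
          rw [← h1]
          exact ENNReal.toReal_mono hTfin h2
  have hpartsub : ∀ k ∈ K.filter (fun k => ¬ cube ε k ⊆ Ω),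
      cube ε k ∩ Ω ⊆ Ω ∩ cthickening ε Ωᶜ := by
    intro k hk
    rw [Finset.mem_filter] at hk
    obtain ⟨z, hz, hzn⟩ := not_subset.1 hk.2
    intro x hx
    refine ⟨hx.2, mem_cthickening_of_dist_le x z ε Ωᶜ hzn ?_⟩
    rw [dist_pi_le_iff hε.le]
    intro i
    have hx1 := hx.1
    rw [cube_eq_pi hε] at hx1 hz
    have hxi := hx1 i (mem_univ i)
    have hzi := hz i (mem_univ i)
    rw [mem_Ico] at hxi hzi
    rw [Real.dist_eq, abs_le]
    constructor <;> [linarith [hxi.1, hzi.2]; linarith [hxi.2, hzi.1]]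
  have hΩcth_fin : volume (Ω ∩ cthickening ε Ωᶜ) ≠ ∞ :=
    (lt_of_le_of_lt (measure_mono inter_subset_left) (lt_top_iff_ne_top.2 hΩfin)).ne
  -- assemble
  calc ‖∑ k ∈ K, ((∫ x in cube ε k ∩ Ω, g (x, fracPart (ε⁻¹ • x))) - ∫ x in cube ε k ∩ Ω, G x)‖
      ≤ ∑ k ∈ K, ‖(∫ x in cube ε k ∩ Ω, g (x, fracPart (ε⁻¹ • x))) - ∫ x in cube ε k ∩ Ω, G x‖ :=
        norm_sum_le _ _
    _ = (∑ k ∈ K.filter (fun k => cube ε k ⊆ Ω),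
          ‖(∫ x in cube ε k ∩ Ω, g (x, fracPart (ε⁻¹ • x))) - ∫ x in cube ε k ∩ Ω, G x‖)
        + ∑ k ∈ K.filter (fun k => ¬ cube ε k ⊆ Ω),
          ‖(∫ x in cube ε k ∩ Ω, g (x, fracPart (ε⁻¹ • x))) - ∫ x in cube ε k ∩ Ω, G x‖ :=
        (Finset.sum_filter_add_sum_filter_not K _ _).symm
    _ ≤ (∑ k ∈ K.filter (fun k => cube ε k ⊆ Ω), 2 * δ' * (volume (cube ε k ∩ Ω)).toReal)
        + ∑ k ∈ K.filter (fun k => ¬ cube ε k ⊆ Ω), 2 * ‖g‖ * (volume (cube ε k ∩ Ω)).toReal :=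
        add_le_add (Finset.sum_le_sum hfullbound)
          (Finset.sum_le_sum fun k hk => hpartbound k (Finset.filter_subset _ _ hk))
    _ = 2 * δ' * (∑ k ∈ K.filter (fun k => cube ε k ⊆ Ω), (volume (cube ε k ∩ Ω)).toReal)
        + 2 * ‖g‖ * ∑ k ∈ K.filter (fun k => ¬ cube ε k ⊆ Ω), (volume (cube ε k ∩ Ω)).toReal := by
        rw [Finset.mul_sum, Finset.mul_sum]
    _ ≤ 2 * δ' * (volume Ω).toReal + 2 * ‖g‖ * (volume (Ω ∩ cthickening ε Ωᶜ)).toReal := by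
        refine add_le_add ?_ ?_
        · refine mul_le_mul_of_nonneg_left ?_ (by linarith)
          exact hsum_le _ (Finset.filter_subset _ _) Ω (fun k _ => inter_subset_right) hΩfin
        · refine mul_le_mul_of_nonneg_left ?_ (by positivity)
          exact hsum_le _ (Finset.filter_subset _ _) _ hpartsub hΩcth_fin

lemma two_scale_tendsto (Ω : Set (Fin d → ℝ)) (hΩo : IsOpen Ω) (hΩb : Bornology.IsBounded Ω)
    (g : BoundedContinuousFunction ((Fin d → ℝ) × (Fin d → ℝ)) ℝ)
    (ε : ℕ → ℝ) (hε_pos : ∀ h, 0 < ε h) (hε_lim : Tendsto ε atTop (𝓝 0)) :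
    Tendsto (fun h => ∫ x in Ω, g (x, fracPart ((ε h)⁻¹ • x))) atTop
      (𝓝 (∫ p in Ω ×ˢ unitCell d, g p)) := by
  have hΩm : MeasurableSet Ω := hΩo.measurableSet
  have hΩfin : volume Ω ≠ ∞ := hΩb.measure_lt_top.ne
  obtain ⟨R, hΩsub⟩ := hΩb.subset_closedBall 0
  haveI : IsFiniteMeasure (volume.restrict Ω) := by
    constructor
    rw [Measure.restrict_apply_univ]
    exact lt_top_iff_ne_top.2 hΩfin
  -- Fubini
  have hfub : ∫ p in Ω ×ˢ unitCell d, g p = ∫ x in Ω, ∫ y in unitCell d, g (x, y) := by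
    rw [Measure.volume_eq_prod]
    refine setIntegral_prod _ ?_
    refine integrableOn_of_bdd' g.continuous.measurable.aestronglyMeasurable
      (fun p => g.norm_coe_le_norm p) ?_
    rw [Measure.prod_prod, volume_unitCell, mul_one]
    exact hΩfin
  rw [hfub]
  -- boundary measure tends to zero
  have hbdR : Tendsto (fun h => (volume (Ω ∩ cthickening (ε h) Ωᶜ)).toReal) atTop (𝓝 0) := by
    have h1 : Tendsto (fun r => volume.restrict Ω (cthickening r Ωᶜ)) (𝓝 0)
        (𝓝 (volume.restrict Ω Ωᶜ)) :=
      tendsto_measure_cthickening_of_isClosed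
        ⟨1, one_pos, (measure_lt_top _ _).ne⟩ (isClosed_compl_iff.2 hΩo)
    have h2 : volume.restrict Ω Ωᶜ = 0 := by
      rw [Measure.restrict_apply hΩm.compl, compl_inter_self, measure_empty]
    rw [h2] at h1
    have h3 : Tendsto (fun h => volume.restrict Ω (cthickening (ε h) Ωᶜ)) atTop (𝓝 0) :=
      h1.comp hε_lim
    have h4 := (ENNReal.tendsto_toReal ENNReal.zero_ne_top).comp h3
    simp only [Function.comp_def, ENNReal.toReal_zero] at h4
    refine h4.congr fun h => ?_
    rw [Measure.restrict_apply (isClosed_cthickening.measurableSet), inter_comm]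
  -- uniform continuity on a compact set
  rw [Metric.tendsto_atTop]
  intro δ hδ
  set V := (volume Ω).toReal with hV
  have hV0 : 0 ≤ V := ENNReal.toReal_nonneg
  set δ' := δ / (4 * (V + 1)) with hδ'def
  have hδ'pos : 0 < δ' := by
    apply div_pos hδ
    nlinarith
  have hcomp : IsCompact (closure Ω ×ˢ closedBall (0 : Fin d → ℝ) 1) :=
    hΩb.isCompact_closure.prod (isCompact_closedBall 0 1)
  have hUC : UniformContinuousOn g (closure Ω ×ˢ closedBall (0 : Fin d → ℝ) 1) :=
    hcomp.uniformContinuousOn_of_continuous g.continuous.continuousOn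
  obtain ⟨η, hη, hunif0⟩ := (Metric.uniformContinuousOn_iff.1 hUC) δ' hδ'pos
  have hunif : ∀ p ∈ closure Ω ×ˢ closedBall (0 : Fin d → ℝ) 1,
      ∀ q ∈ closure Ω ×ˢ closedBall (0 : Fin d → ℝ) 1,
      dist p q < η → ‖g p - g q‖ ≤ δ' := by
    intro p hp q hq hpq
    rw [← dist_eq_norm]
    exact (hunif0 p hp q hq hpq).le
  have ev1 : ∀ᶠ h in atTop, ε h < η := hε_lim.eventually_lt_const hη
  have ev2 : ∀ᶠ h in atTop, 2 * ‖g‖ * (volume (Ω ∩ cthickening (ε h) Ωᶜ)).toReal < δ / 4 := by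
    have h5 : Tendsto (fun h => 2 * ‖g‖ * (volume (Ω ∩ cthickening (ε h) Ωᶜ)).toReal)
        atTop (𝓝 0) := by
      have := hbdR.const_mul (2 * ‖g‖)
      simpa using this
    exact h5.eventually_lt_const (by linarith)
  obtain ⟨M, hM⟩ := eventually_atTop.1 (ev1.and ev2)
  refine ⟨M, fun n hn => ?_⟩
  obtain ⟨hn1, hn2⟩ := hM n hn
  rw [Real.dist_eq, ← Real.norm_eq_abs]
  have hkey := key_est Ω hΩm hΩfin hΩsub g hδ'pos.le hunif (hε_pos n) hn1
  have hbound : 2 * δ' * V ≤ δ / 2 := by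
    rw [hδ'def]
    have h1 : (0:ℝ) < 4 * (V + 1) := by nlinarith
    rw [mul_comm (2:ℝ) _, mul_assoc, div_mul_eq_mul_div, div_le_div_iff₀ h1 two_pos]
    nlinarith
  calc ‖(∫ x in Ω, g (x, fracPart ((ε n)⁻¹ • x))) - ∫ x in Ω, ∫ y in unitCell d, g (x, y)‖
      ≤ 2 * δ' * V + 2 * ‖g‖ * (volume (Ω ∩ cthickening (ε n) Ωᶜ)).toReal := hkey
    _ < δ / 2 + δ / 4 := by
        have := hbound
        linarith
    _ < δ := by linarith

end TwoScaleAux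


open TwoScaleAux in
/-- **Projection property of two-scale limit measures.**
Let `Ω ⊆ ℝ^d` be a bounded open set, `ε_h → 0⁺` and `u_h` a bounded sequence in `L¹(Ω, ℝ^m)`.
Let `ν̂_h` be the pushforward of Lebesgue measure restricted to `Ω` under
`x ↦ (x, ⟨x/ε_h⟩, u_h(x))`. If a subsequence `ν̂_{h_i}` converges weakly (tested against
bounded continuous functions) to a finite measure `ν̂`, then for every Borel set
`S ⊆ ℝ^d × ℝ^d` one has `ν̂(S × ℝ^m) = |S ∩ (Ω × □)|`. -/
theorem two_scale_projection_property {d m : ℕ}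
    (Ω : Set (Fin d → ℝ)) (hΩo : IsOpen Ω) (hΩb : Bornology.IsBounded Ω)
    (ε : ℕ → ℝ) (hε_pos : ∀ h, 0 < ε h) (hε_lim : Tendsto ε atTop (𝓝 0))
    (u : ℕ → (Fin d → ℝ) → Fin m → ℝ)
    (hu_meas : ∀ h, Measurable (u h))
    (hu_int : ∀ h, IntegrableOn (u h) Ω)
    (hu_bdd : ∃ C : ℝ, ∀ h, ∫ x in Ω, ‖u h x‖ ≤ C)
    (νh : ℕ → Measure ((Fin d → ℝ) × (Fin d → ℝ) × (Fin m → ℝ)))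
    (hνh : ∀ h, νh h =
      Measure.map (fun x => (x, fracPart ((ε h)⁻¹ • x), u h x)) (volume.restrict Ω))
    (φ : ℕ → ℕ) (hφ : StrictMono φ)
    (ν : Measure ((Fin d → ℝ) × (Fin d → ℝ) × (Fin m → ℝ))) (hν_fin : IsFiniteMeasure ν)
    (hconv : ∀ f : BoundedContinuousFunction ((Fin d → ℝ) × (Fin d → ℝ) × (Fin m → ℝ)) ℝ,
      Tendsto (fun i => ∫ p, f p ∂νh (φ i)) atTop (𝓝 (∫ p, f p ∂ν))) :
    ∀ S : Set ((Fin d → ℝ) × (Fin d → ℝ)), MeasurableSet S →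
      ν {p : (Fin d → ℝ) × (Fin d → ℝ) × (Fin m → ℝ) | (p.1, p.2.1) ∈ S} =
        volume (S ∩ Ω ×ˢ unitCell d) := by
  intro S hS
  set π : (Fin d → ℝ) × (Fin d → ℝ) × (Fin m → ℝ) → (Fin d → ℝ) × (Fin d → ℝ) :=
    fun p => (p.1, p.2.1) with hπdef
  have hπc : Continuous π := by fun_prop
  have hπm : Measurable π := hπc.measurable
  set μ := ν.map π with hμ
  haveI : IsFiniteMeasure μ := by
    constructor
    rw [hμ, Measure.map_apply hπm MeasurableSet.univ]
    exact measure_lt_top ν _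
  have hΩm := hΩo.measurableSet
  have hΩfin : volume Ω ≠ ∞ := hΩb.measure_lt_top.ne
  have hprodfin : volume (Ω ×ˢ unitCell d) ≠ ∞ := by
    rw [Measure.volume_eq_prod, Measure.prod_prod, volume_unitCell, mul_one]
    exact hΩfin
  set lam := volume.restrict (Ω ×ˢ unitCell d) with hlam
  haveI : IsFiniteMeasure lam := by
    constructor
    rw [hlam, Measure.restrict_apply_univ]
    exact lt_top_iff_ne_top.2 hprodfin
  have hint : ∀ gr : BoundedContinuousFunction ((Fin d → ℝ) × (Fin d → ℝ)) ℝ,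
      ∫ p, gr p ∂μ = ∫ p, gr p ∂lam := by
    intro gr
    set F : BoundedContinuousFunction ((Fin d → ℝ) × (Fin d → ℝ) × (Fin m → ℝ)) ℝ :=
      gr.compContinuous ⟨π, hπc⟩ with hF
    have hseq : ∀ i, ∫ p, F p ∂(νh (φ i)) = ∫ x in Ω, gr (x, fracPart ((ε (φ i))⁻¹ • x)) := by
      intro i
      rw [hνh (φ i)]
      have hfrac : Measurable fun x : Fin d → ℝ => fracPart ((ε (φ i))⁻¹ • x) := by
        exact measurable_fracPart.comp (measurable_const_smul _)
      have hΦm : Measurable fun x : Fin d → ℝ =>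
          ((x, fracPart ((ε (φ i))⁻¹ • x), u (φ i) x) :
            (Fin d → ℝ) × (Fin d → ℝ) × (Fin m → ℝ)) :=
        measurable_id.prodMk (hfrac.prodMk (hu_meas (φ i)))
      rw [integral_map hΦm.aemeasurable F.continuous.aestronglyMeasurable]
      rfl
    have h1 : Tendsto (fun i => ∫ p, F p ∂(νh (φ i))) atTop (𝓝 (∫ p, F p ∂ν)) := hconv F
    have h2 : Tendsto (fun i => ∫ x in Ω, gr (x, fracPart ((ε (φ i))⁻¹ • x))) atTop
        (𝓝 (∫ p in Ω ×ˢ unitCell d, gr p)) :=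
      two_scale_tendsto Ω hΩo hΩb gr (fun i => ε (φ i)) (fun i => hε_pos _)
        (hε_lim.comp hφ.tendsto_atTop)
    have h3 : ∫ p, F p ∂ν = ∫ p in Ω ×ˢ unitCell d, gr p :=
      tendsto_nhds_unique (h1.congr hseq) h2
    have h4 : ∫ p, F p ∂ν = ∫ p, gr p ∂μ := by
      rw [hμ, integral_map hπm.aemeasurable gr.continuous.aestronglyMeasurable]
      rfl
    rw [← h4, h3, hlam]
  have hmeq : μ = lam := by
    apply MeasureTheory.ext_of_forall_lintegral_eq_of_IsFiniteMeasure
    intro f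
    set fr : BoundedContinuousFunction ((Fin d → ℝ) × (Fin d → ℝ)) ℝ :=
      BoundedContinuousFunction.ofNormedAddCommGroup (fun p => (f p : ℝ))
        (NNReal.continuous_coe.comp f.continuous) (nndist f 0 : ℝ)
        (fun p => by
          rw [Real.norm_eq_abs, abs_of_nonneg (f p).coe_nonneg]
          exact_mod_cast BoundedContinuousFunction.NNReal.upper_bound f p) with hfr
    have e1 : (∫⁻ p, (f p : ℝ≥0∞) ∂μ).toReal = ∫ p, (f p : ℝ) ∂μ :=
      BoundedContinuousFunction.toReal_lintegral_coe_eq_integral f μ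
    have e2 : (∫⁻ p, (f p : ℝ≥0∞) ∂lam).toReal = ∫ p, (f p : ℝ) ∂lam :=
      BoundedContinuousFunction.toReal_lintegral_coe_eq_integral f lam
    have e3 : ∫ p, (f p : ℝ) ∂μ = ∫ p, (f p : ℝ) ∂lam := by
      have h := hint fr
      simpa [hfr] using h
    have fin1 : ∫⁻ p, (f p : ℝ≥0∞) ∂μ ≠ ∞ :=
      (BoundedContinuousFunction.lintegral_lt_top_of_nnreal μ f).ne
    have fin2 : ∫⁻ p, (f p : ℝ≥0∞) ∂lam ≠ ∞ :=
      (BoundedContinuousFunction.lintegral_lt_top_of_nnreal lam f).ne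
    rw [← ENNReal.toReal_eq_toReal_iff' fin1 fin2, e1, e2]
    exact e3
  have hfinal : ν {p : (Fin d → ℝ) × (Fin d → ℝ) × (Fin m → ℝ) | (p.1, p.2.1) ∈ S} = μ S := by
    rw [hμ, Measure.map_apply hπm hS]
    rfl
  rw [hfinal, hmeq, hlam, Measure.restrict_apply hS]
end
end

section
/- Existence of polyconvex energies with prescribed zero set: Let 𝔄 ⊆ M^{2×2} be a nonempty compact polyconvex set and let p ≥ 2. Then there exist a polyconvex function W : M^{2×2} → [0, ∞) and constants c₁, c₂, c₃ > 0 such that c₁‖Λ‖^p − c₂ ≤ W(Λ) ≤ c₃(1 + ‖Λ‖^p) for all Λ ∈ M^{2×2}, and W⁻¹(0) = 𝔄. -/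
open MeasureTheory Filter Topology Metric Set Matrix
open scoped ENNReal

noncomputable section

-- `M^{2×2}` is endowed with the Frobenius norm.
attribute [local instance] Matrix.frobeniusNormedAddCommGroup Matrix.frobeniusNormedSpace

/-- A set `𝔄 ⊆ M^{2×2}` is polyconvex if there is a convex set `𝔠 ⊆ M^{2×2} × ℝ` such that
`𝔄 = {Λ : (Λ, det Λ) ∈ 𝔠}`. -/
def IsPolyconvexSet (A : Set (Matrix (Fin 2) (Fin 2) ℝ)) : Prop :=
  ∃ C : Set (Matrix (Fin 2) (Fin 2) ℝ × ℝ), Convex ℝ C ∧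
    A = {Λ : Matrix (Fin 2) (Fin 2) ℝ | (Λ, Λ.det) ∈ C}

/-- A function `W : M^{2×2} → ℝ` is polyconvex if there is a convex function
`V : M^{2×2} × ℝ → ℝ` such that `W Λ = V (Λ, det Λ)` for all `Λ`. -/
def IsPolyconvexFun (W : Matrix (Fin 2) (Fin 2) ℝ → ℝ) : Prop :=
  ∃ V : Matrix (Fin 2) (Fin 2) ℝ × ℝ → ℝ, ConvexOn ℝ Set.univ V ∧
    ∀ Λ : Matrix (Fin 2) (Fin 2) ℝ, W Λ = V (Λ, Λ.det)

/-- Auxiliary reindexing identity for sums of `dite`s over `Fin`. -/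
lemma sum_dite_fin {M : Type*} [AddCommMonoid M] {c n : ℕ} (hcn : c ≤ n) (g : Fin c → M) :
    (∑ i : Fin n, if h : (i : ℕ) < c then g ⟨i, h⟩ else 0) = ∑ j : Fin c, g j := by
  set G : ℕ → M := fun i => if h : i < c then g ⟨i, h⟩ else 0 with hG
  calc (∑ i : Fin n, if h : (i : ℕ) < c then g ⟨i, h⟩ else 0)
      = ∑ i ∈ Finset.range n, G i := Fin.sum_univ_eq_sum_range G n
    _ = ∑ i ∈ Finset.range c, G i := by
        refine (Finset.sum_subset (Finset.range_subset_range.mpr hcn) fun i _ hi => ?_).symm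
        exact dif_neg (by simpa using hi)
    _ = ∑ j : Fin c, G j := (Fin.sum_univ_eq_sum_range G c).symm
    _ = ∑ j : Fin c, g j := by
        refine Finset.sum_congr rfl fun j _ => ?_
        simp [hG]

/-- The convex hull of a compact set in a finite-dimensional normed space is compact. -/
lemma isCompact_convexHull_of_isCompact {E : Type*} [NormedAddCommGroup E] [NormedSpace ℝ E]
    [FiniteDimensional ℝ E] {K : Set E} (hK : IsCompact K) : IsCompact (convexHull ℝ K) := by
  rcases K.eq_empty_or_nonempty with rfl | ⟨k₀, hk₀⟩
  · simp [isCompact_empty]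
  set n := Module.finrank ℝ E + 1 with hn
  set T : (Fin n → ℝ) × (Fin n → E) → E := fun q => ∑ i, q.1 i • q.2 i with hT
  have hTcont : Continuous T := by
    apply continuous_finset_sum
    intro i _
    exact ((continuous_apply i).comp continuous_fst).smul
      ((continuous_apply i).comp continuous_snd)
  have hS : IsCompact ((stdSimplex ℝ (Fin n)) ×ˢ Set.univ.pi fun _ : Fin n => K) :=
    (isCompact_stdSimplex (𝕜 := ℝ) (ι := Fin n)).prod (isCompact_univ_pi fun _ => hK)
  have him : convexHull ℝ K
      = T '' ((stdSimplex ℝ (Fin n)) ×ˢ Set.univ.pi fun _ : Fin n => K) := by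
    apply Set.Subset.antisymm
    · intro y hy
      obtain ⟨ι, hι, z, w, hzK, hai, hw0, hw1, hwz⟩ := eq_pos_convex_span_of_mem_convexHull hy
      letI := hι
      have hcard : Fintype.card ι ≤ n :=
        hai.card_le_finrank_succ.trans (Nat.succ_le_succ (Submodule.finrank_le _))
      set c := Fintype.card ι with hc
      set σ := Fintype.equivFin ι with hσ
      set w' : Fin n → ℝ := fun i => if h : (i : ℕ) < c then w (σ.symm ⟨i, h⟩) else 0 with hw'
      set x' : Fin n → E := fun i => if h : (i : ℕ) < c then z (σ.symm ⟨i, h⟩) else k₀ with hx'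
      refine ⟨(w', x'), ⟨⟨fun i => ?_, ?_⟩, fun i _ => ?_⟩, ?_⟩
      · rw [hw']; dsimp only
        split_ifs with h
        · exact (hw0 _).le
        · exact le_rfl
      · rw [hw']
        rw [sum_dite_fin hcard (fun j => w (σ.symm j))]
        rw [Equiv.sum_comp σ.symm w]
        exact hw1
      · rw [hx']; dsimp only
        split_ifs with h
        · exact hzK (Set.mem_range_self _)
        · exact hk₀
      · rw [hT]; dsimp only
        have : ∀ i : Fin n, w' i • x' i
            = if h : (i : ℕ) < c then w (σ.symm ⟨i, h⟩) • z (σ.symm ⟨i, h⟩) else 0 := by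
          intro i
          rw [hw', hx']; dsimp only
          split_ifs with h <;> simp
        rw [Finset.sum_congr rfl fun i _ => this i,
          sum_dite_fin hcard (fun j => w (σ.symm j) • z (σ.symm j)),
          Equiv.sum_comp σ.symm (fun i => w i • z i)]
        exact hwz
    · rintro _ ⟨⟨w, x⟩, ⟨hw, hx⟩, rfl⟩
      exact (convex_convexHull ℝ K).sum_mem (fun i _ => hw.1 i) hw.2
        (fun i _ => subset_convexHull ℝ K (hx i (Set.mem_univ i)))
  rw [him]
  exact hS.image hTcont

/-- The distance to a nonempty convex set is a convex function. -/
lemma convexOn_infDist' {E : Type*} [NormedAddCommGroup E] [NormedSpace ℝ E]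
    {D : Set E} (hD : Convex ℝ D) (hne : D.Nonempty) :
    ConvexOn ℝ Set.univ (fun x => infDist x D) := by
  refine ⟨convex_univ, fun x _ y _ a b ha hb hab => ?_⟩
  refine le_of_forall_pos_le_add fun ε hε => ?_
  obtain ⟨px, hpx, hdx⟩ := (infDist_lt_iff hne).mp
    (lt_add_of_pos_right (infDist x D) hε : infDist x D < infDist x D + ε)
  obtain ⟨py, hpy, hdy⟩ := (infDist_lt_iff hne).mp
    (lt_add_of_pos_right (infDist y D) hε : infDist y D < infDist y D + ε)
  have hmem : a • px + b • py ∈ D := hD hpx hpy ha hb hab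
  calc infDist (a • x + b • y) D ≤ dist (a • x + b • y) (a • px + b • py) :=
        infDist_le_dist_of_mem hmem
    _ = ‖a • (x - px) + b • (y - py)‖ := by
        rw [dist_eq_norm]; congr 1; module
    _ ≤ a * dist x px + b * dist y py := by
        refine (norm_add_le _ _).trans ?_
        rw [norm_smul, norm_smul, Real.norm_eq_abs, Real.norm_eq_abs,
          abs_of_nonneg ha, abs_of_nonneg hb, dist_eq_norm, dist_eq_norm]
    _ ≤ a * (infDist x D + ε) + b * (infDist y D + ε) := by
        have := hdx.le; have := hdy.le
        gcongr
    _ = a • infDist x D + b • infDist y D + ε := by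
        simp only [smul_eq_mul]; nlinarith [hab]

/-- The `q`-th power (`q ≥ 1`) of a nonnegative convex function is convex. -/
lemma convexOn_rpow_comp {E : Type*} [NormedAddCommGroup E] [NormedSpace ℝ E]
    {f : E → ℝ} (hf : ConvexOn ℝ Set.univ f) (hf0 : ∀ x, 0 ≤ f x) {q : ℝ} (hq : 1 ≤ q) :
    ConvexOn ℝ Set.univ (fun x => f x ^ q) := by
  refine ⟨convex_univ, fun x _ y _ a b ha hb hab => ?_⟩
  have h1 : f (a • x + b • y) ^ q ≤ (a * f x + b * f y) ^ q := by
    refine Real.rpow_le_rpow (hf0 _) ?_ (by linarith)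
    simpa [smul_eq_mul] using hf.2 (Set.mem_univ x) (Set.mem_univ y) ha hb hab
  refine h1.trans ?_
  have h2 := (convexOn_rpow hq).2 (Set.mem_Ici.mpr (hf0 x)) (Set.mem_Ici.mpr (hf0 y)) ha hb hab
  simpa [smul_eq_mul] using h2

/-- Each entry of a `2×2` matrix is bounded by its Frobenius norm. -/
lemma abs_entry_le_frobenius (A : Matrix (Fin 2) (Fin 2) ℝ) (i j : Fin 2) : |A i j| ≤ ‖A‖ := by
  have h : |A i j| ^ (2:ℝ) ≤ ∑ k, ∑ l, ‖A k l‖ ^ (2:ℝ) := by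
    calc |A i j| ^ (2:ℝ) ≤ ∑ l, ‖A i l‖ ^ (2:ℝ) :=
          Finset.single_le_sum (f := fun l => ‖A i l‖ ^ (2:ℝ))
            (fun l _ => by positivity) (Finset.mem_univ j)
      _ ≤ ∑ k, ∑ l, ‖A k l‖ ^ (2:ℝ) :=
          Finset.single_le_sum (f := fun k => ∑ l, ‖A k l‖ ^ (2:ℝ))
            (fun k _ => by positivity) (Finset.mem_univ i)
  have h2 : (|A i j| ^ (2:ℝ)) ^ ((1:ℝ)/2) ≤ (∑ k, ∑ l, ‖A k l‖ ^ (2:ℝ)) ^ ((1:ℝ)/2) :=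
    Real.rpow_le_rpow (by positivity) h (by norm_num)
  rw [Matrix.frobenius_norm_def]
  rwa [← Real.rpow_mul (abs_nonneg _), show (2:ℝ) * (1/2) = 1 by norm_num, Real.rpow_one] at h2

/-- The determinant of a `2×2` matrix is bounded by twice the square of its Frobenius norm. -/
lemma abs_det_le_frobenius (A : Matrix (Fin 2) (Fin 2) ℝ) : |A.det| ≤ 2 * ‖A‖ ^ 2 := by
  rw [Matrix.det_fin_two]
  have h00 := abs_entry_le_frobenius A 0 0
  have h01 := abs_entry_le_frobenius A 0 1
  have h10 := abs_entry_le_frobenius A 1 0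
  have h11 := abs_entry_le_frobenius A 1 1
  have habs : |A 0 0 * A 1 1 - A 0 1 * A 1 0| ≤ |A 0 0| * |A 1 1| + |A 0 1| * |A 1 0| := by
    calc |A 0 0 * A 1 1 - A 0 1 * A 1 0| ≤ |A 0 0 * A 1 1| + |A 0 1 * A 1 0| := abs_sub _ _
      _ = |A 0 0| * |A 1 1| + |A 0 1| * |A 1 0| := by rw [abs_mul, abs_mul]
  have hn : (0:ℝ) ≤ ‖A‖ := norm_nonneg _
  nlinarith [abs_nonneg (A 0 0), abs_nonneg (A 0 1), abs_nonneg (A 1 0), abs_nonneg (A 1 1)]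

/-- **Existence of polyconvex energies with prescribed zero set.**
Let `𝔄 ⊆ M^{2×2}` be a nonempty compact polyconvex set and `p ≥ 2`. Then there exist a
nonnegative polyconvex function `W` and constants `c₁, c₂, c₃ > 0` such that
`c₁‖Λ‖^p − c₂ ≤ W Λ ≤ c₃(1 + ‖Λ‖^p)` for all `Λ`, and `W⁻¹(0) = 𝔄`. -/
theorem exists_polyconvex_energy_with_zero_set
    (𝔄 : Set (Matrix (Fin 2) (Fin 2) ℝ)) (h_ne : 𝔄.Nonempty) (h_cpt : IsCompact 𝔄)
    (h_pc : IsPolyconvexSet 𝔄) (p : ℝ) (hp : 2 ≤ p) :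
    ∃ (W : Matrix (Fin 2) (Fin 2) ℝ → ℝ) (c₁ c₂ c₃ : ℝ),
      IsPolyconvexFun W ∧ (∀ Λ, 0 ≤ W Λ) ∧
      0 < c₁ ∧ 0 < c₂ ∧ 0 < c₃ ∧
      (∀ Λ : Matrix (Fin 2) (Fin 2) ℝ,
        c₁ * ‖Λ‖ ^ p - c₂ ≤ W Λ ∧ W Λ ≤ c₃ * (1 + ‖Λ‖ ^ p)) ∧
      W ⁻¹' {0} = 𝔄 := by
  classical
  obtain ⟨C, hCconv, hCeq⟩ := h_pc
  have hdetc : Continuous (fun Λ : Matrix (Fin 2) (Fin 2) ℝ => Λ.det) := by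
    simp_rw [Matrix.det_fin_two]
    fun_prop
  set f : Matrix (Fin 2) (Fin 2) ℝ → Matrix (Fin 2) (Fin 2) ℝ × ℝ := fun Λ => (Λ, Λ.det) with hf
  have hp0 : (0:ℝ) < p := by linarith
  have hp1 : (1:ℝ) ≤ p := by linarith
  have hq1 : (1:ℝ) ≤ p / 2 := by linarith
  have hq0 : p / 2 ≠ 0 := by positivity
  have hfc : Continuous f := continuous_id.prodMk hdetc
  set K : Set (Matrix (Fin 2) (Fin 2) ℝ × ℝ) := f '' 𝔄 with hK
  have hKcpt : IsCompact K := h_cpt.image hfc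
  set D : Set (Matrix (Fin 2) (Fin 2) ℝ × ℝ) := convexHull ℝ K with hD
  have hDconv : Convex ℝ D := convex_convexHull ℝ K
  have hDcl : IsClosed D := (isCompact_convexHull_of_isCompact hKcpt).isClosed
  have hDne : D.Nonempty := (h_ne.image f).mono (subset_convexHull ℝ K)
  have hDC : D ⊆ C := by
    refine convexHull_min ?_ hCconv
    rintro _ ⟨Λ, hΛ, rfl⟩
    have : Λ ∈ {Λ : Matrix (Fin 2) (Fin 2) ℝ | (Λ, Λ.det) ∈ C} := hCeq ▸ hΛ
    exact this
  -- radius bound for 𝔄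
  obtain ⟨r, hr⟩ := h_cpt.isBounded.subset_closedBall (0 : Matrix (Fin 2) (Fin 2) ℝ)
  set R : ℝ := (max r 0 + 1) ^ p with hR
  have hRpos : (0:ℝ) < R := Real.rpow_pos_of_pos (by positivity) p
  have hR𝔄 : ∀ Λ ∈ 𝔄, ‖Λ‖ ^ p ≤ R := by
    intro Λ hΛ
    have h1 : ‖Λ‖ ≤ max r 0 + 1 := by
      have h0 := mem_closedBall.mp (hr hΛ)
      rw [dist_zero_right] at h0
      have hr0 : r ≤ max r 0 := le_max_left _ _
      linarith
    exact Real.rpow_le_rpow (norm_nonneg _) h1 hp0.le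
  -- the convex potential
  set V : Matrix (Fin 2) (Fin 2) ℝ × ℝ → ℝ := fun x => infDist x D ^ (p/2) + max (‖x.1‖ ^ p - R) 0 with hV
  set W : Matrix (Fin 2) (Fin 2) ℝ → ℝ := fun Λ => V (f Λ) with hW
  -- convexity of V
  have hV1 : ConvexOn ℝ (Set.univ : Set (Matrix (Fin 2) (Fin 2) ℝ × ℝ)) (fun x => infDist x D ^ (p/2)) :=
    convexOn_rpow_comp (convexOn_infDist' hDconv hDne) (fun _ => infDist_nonneg) hq1
  have hV2m : ConvexOn ℝ (Set.univ : Set (Matrix (Fin 2) (Fin 2) ℝ)) (fun Λ : Matrix (Fin 2) (Fin 2) ℝ => max (‖Λ‖ ^ p - R) 0) := by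
    have ha : ConvexOn ℝ (Set.univ : Set (Matrix (Fin 2) (Fin 2) ℝ)) (fun Λ : Matrix (Fin 2) (Fin 2) ℝ => ‖Λ‖ ^ p) :=
      convexOn_rpow_comp convexOn_univ_norm (fun _ => norm_nonneg _) hp1
    have hb : ConvexOn ℝ (Set.univ : Set (Matrix (Fin 2) (Fin 2) ℝ)) (fun Λ : Matrix (Fin 2) (Fin 2) ℝ => ‖Λ‖ ^ p - R) :=
      ha.sub (concaveOn_const R convex_univ)
    exact hb.sup (convexOn_const (0:ℝ) convex_univ)
  have hV2 : ConvexOn ℝ (Set.univ : Set (Matrix (Fin 2) (Fin 2) ℝ × ℝ)) (fun x : Matrix (Fin 2) (Fin 2) ℝ × ℝ => max (‖x.1‖ ^ p - R) 0) := by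
    have h := hV2m.comp_affineMap ((LinearMap.fst ℝ (Matrix (Fin 2) (Fin 2) ℝ) ℝ).toAffineMap)
    rw [Set.preimage_univ] at h
    exact h
  have hVconv : ConvexOn ℝ (Set.univ : Set (Matrix (Fin 2) (Fin 2) ℝ × ℝ)) V := hV1.add hV2
  -- nonnegativity
  have hWnn : ∀ Λ, 0 ≤ W Λ := fun Λ =>
    add_nonneg (Real.rpow_nonneg infDist_nonneg _) (le_max_right _ _)
  -- a base point in D
  obtain ⟨a₀, ha₀⟩ := h_ne
  set M₀ : ℝ := ‖f a₀‖ with hM₀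
  have hM₀0 : 0 ≤ M₀ := norm_nonneg _
  have hfa₀D : f a₀ ∈ D := subset_convexHull ℝ K ⟨a₀, ha₀, rfl⟩
  -- constants
  refine ⟨W, 1, R, (2 + M₀) ^ (p/2) * 2 ^ p + 1, ⟨V, hVconv, fun Λ => rfl⟩, hWnn,
    one_pos, hRpos, by positivity, fun Λ => ⟨?_, ?_⟩, ?_⟩
  · -- lower bound
    have h1 : ‖Λ‖ ^ p - R ≤ max (‖Λ‖ ^ p - R) 0 := le_max_left _ _
    have h2 : (0:ℝ) ≤ infDist (f Λ) D ^ (p/2) := Real.rpow_nonneg infDist_nonneg _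
    simp only [hW, hV, one_mul]
    linarith
  · -- upper bound
    set s : ℝ := ‖Λ‖ with hs
    have hs0 : (0:ℝ) ≤ s := norm_nonneg _
    have hdet : |Λ.det| ≤ 2 * s ^ 2 := abs_det_le_frobenius Λ
    have hnormf : ‖f Λ‖ ≤ s + 2 * s ^ 2 := by
      rw [Prod.norm_def]
      refine max_le (by nlinarith) ?_
      simpa [Real.norm_eq_abs] using hdet.trans (by nlinarith)
    have hd : infDist (f Λ) D ≤ (2 + M₀) * (1 + s) ^ 2 := by
      calc infDist (f Λ) D ≤ dist (f Λ) (f a₀) := infDist_le_dist_of_mem hfa₀D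
        _ ≤ ‖f Λ‖ + M₀ := by rw [dist_eq_norm]; exact (norm_sub_le _ _)
        _ ≤ s + 2 * s ^ 2 + M₀ := by linarith
        _ ≤ (2 + M₀) * (1 + s) ^ 2 := by nlinarith
    have hdp : infDist (f Λ) D ^ (p/2) ≤ (2 + M₀) ^ (p/2) * (1 + s) ^ p := by
      calc infDist (f Λ) D ^ (p/2) ≤ ((2 + M₀) * (1 + s) ^ 2) ^ (p/2) :=
            Real.rpow_le_rpow infDist_nonneg hd (by positivity)
        _ = (2 + M₀) ^ (p/2) * ((1 + s) ^ 2) ^ (p/2) :=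
            Real.mul_rpow (by positivity) (by positivity)
        _ = (2 + M₀) ^ (p/2) * (1 + s) ^ p := by
            rw [← Real.rpow_natCast (1 + s) 2,
              ← Real.rpow_mul (by positivity : (0:ℝ) ≤ 1 + s),
              show ((2:ℕ):ℝ) * (p/2) = p by push_cast; ring]
    have hbin : (1 + s) ^ p ≤ 2 ^ p * (1 + s ^ p) := by
      rcases le_total s 1 with hle | hle
      · have h1 : (1 + s) ^ p ≤ (2:ℝ) ^ p :=
          Real.rpow_le_rpow (by positivity) (by linarith) hp0.le
        have h2 : (0:ℝ) ≤ s ^ p := Real.rpow_nonneg hs0 _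
        nlinarith [Real.rpow_pos_of_pos (show (0:ℝ) < 2 by norm_num) p]
      · have h1 : (1 + s) ^ p ≤ (2 * s) ^ p :=
          Real.rpow_le_rpow (by positivity) (by linarith) hp0.le
        have h2 : ((2:ℝ) * s) ^ p = 2 ^ p * s ^ p := Real.mul_rpow (by norm_num) hs0
        have h3 : (0:ℝ) < 2 ^ p := Real.rpow_pos_of_pos (by norm_num) p
        nlinarith
    have hmax : max (s ^ p - R) 0 ≤ s ^ p :=
      max_le (by linarith) (Real.rpow_nonneg hs0 _)
    have hsp : (0:ℝ) ≤ s ^ p := Real.rpow_nonneg hs0 _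
    have h2M : (0:ℝ) < (2 + M₀) ^ (p/2) := Real.rpow_pos_of_pos (by positivity) _
    have hmain : infDist (f Λ) D ^ (p/2) ≤ (2 + M₀) ^ (p/2) * 2 ^ p * (1 + s ^ p) := by
      calc infDist (f Λ) D ^ (p/2) ≤ (2 + M₀) ^ (p/2) * (1 + s) ^ p := hdp
        _ ≤ (2 + M₀) ^ (p/2) * (2 ^ p * (1 + s ^ p)) := by
            exact mul_le_mul_of_nonneg_left hbin h2M.le
        _ = (2 + M₀) ^ (p/2) * 2 ^ p * (1 + s ^ p) := by ring
    simp only [hW, hV]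
    calc infDist (f Λ) D ^ (p/2) + max (‖(f Λ).1‖ ^ p - R) 0
        ≤ (2 + M₀) ^ (p/2) * 2 ^ p * (1 + s ^ p) + s ^ p := by
          refine add_le_add hmain ?_
          exact hmax
      _ ≤ ((2 + M₀) ^ (p/2) * 2 ^ p + 1) * (1 + s ^ p) := by nlinarith
  · -- zero set
    ext Λ
    simp only [Set.mem_preimage, Set.mem_singleton_iff]
    constructor
    · intro h
      have h1 : (0:ℝ) ≤ infDist (f Λ) D ^ (p/2) := Real.rpow_nonneg infDist_nonneg _
      have h2 : (0:ℝ) ≤ max (‖(f Λ).1‖ ^ p - R) 0 := le_max_right _ _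
      have hWe : W Λ = infDist (f Λ) D ^ (p/2) + max (‖(f Λ).1‖ ^ p - R) 0 := rfl
      rw [hWe] at h
      have h3 : infDist (f Λ) D ^ (p/2) = 0 := by linarith
      have h4 : infDist (f Λ) D = 0 :=
        (Real.rpow_eq_zero infDist_nonneg hq0).mp h3
      have h5 : f Λ ∈ D := (hDcl.mem_iff_infDist_zero hDne).mpr h4
      have h6 : f Λ ∈ C := hDC h5
      rw [hCeq]
      exact h6
    · intro hΛ
      have h1 : infDist (f Λ) D = 0 :=
        infDist_zero_of_mem (subset_convexHull ℝ K ⟨Λ, hΛ, rfl⟩)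
      have h2 : max (‖(f Λ).1‖ ^ p - R) 0 = 0 := by
        refine max_eq_right ?_
        have := hR𝔄 Λ hΛ
        simp only [hf]
        linarith
      have hWe : W Λ = infDist (f Λ) D ^ (p/2) + max (‖(f Λ).1‖ ^ p - R) 0 := rfl
      rw [hWe, h1, h2, Real.zero_rpow hq0, add_zero]
end
end

section
/- Polyconvexity of triples with single-signed determinant differences: Let C₁, C₂, C₃ ∈ M^{2×2} be such that either det(C_k − C_j) < 0 for all k ≠ j, or det(C_k − C_j) > 0 for all k ≠ j. Then the set {C₁, C₂, C₃} is polyconvex (equivalently, it equals its polyconvex hull). -/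
open Matrix

noncomputable section

/-- The polyconvex hull of `𝔄 ⊆ M^{2×2}`: the intersection of all polyconvex sets
containing `𝔄`. -/
def polyconvexHull (A : Set (Matrix (Fin 2) (Fin 2) ℝ)) : Set (Matrix (Fin 2) (Fin 2) ℝ) :=
  ⋂₀ {B : Set (Matrix (Fin 2) (Fin 2) ℝ) | IsPolyconvexSet B ∧ A ⊆ B}

/-! The determinant is a quadratic form on `M^{2×2}`, so on a convex combination `Λ = ∑ wᵢ Xᵢ`
the gap `∑ wᵢ det Xᵢ - det Λ` equals `½ ∑ᵢⱼ wᵢ wⱼ det (Xᵢ - Xⱼ)`. If all `det (X - Y)` with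
`X ≠ Y` in `𝔄` have one strict sign, this gap vanishes only when all the `Xᵢ` of positive weight
coincide. Hence the lift `{(X, det X) : X ∈ 𝔄}` meets the graph of `det` in its convex hull
only over `𝔄`, and that convex hull exhibits `𝔄` as polyconvex. -/

open Finset in
theorem sum_sum_mul_det_sub_fin_two {ι : Type*} [Fintype ι] {w : ι → ℝ} (hw : ∑ i, w i = 1)
    (X : ι → Matrix (Fin 2) (Fin 2) ℝ) :
    ∑ i, ∑ j, w i * w j * (X i - X j).det
      = 2 * (∑ i, w i * (X i).det - (∑ i, w i • X i).det) := by
  set mixed : ι → ι → ℝ := fun i j => X i 0 0 * X j 1 1 - X i 0 1 * X j 1 0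
  have hweight : ∑ i, w i * (X i).det = ∑ i, ∑ j, w i * w j * (X i).det := by
    simp_rw [mul_right_comm _ _ (X _).det, ← mul_sum, hw, mul_one]
  have hdet : (∑ i, w i • X i).det = ∑ i, ∑ j, w i * w j * mixed i j := by
    simp only [det_fin_two, Matrix.sum_apply, Matrix.smul_apply, smul_eq_mul, sum_mul_sum,
      ← sum_sub_distrib, mixed]
    exact sum_congr rfl fun i _ => sum_congr rfl fun j _ => by ring
  have hswap (f : ι → ι → ℝ) : ∑ i, ∑ j, w i * w j * f i j = ∑ i, ∑ j, w i * w j * f j i := by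
    rw [sum_comm]
    simp only [mul_comm (w _) (w _)]
  have hexpand : ∑ i, ∑ j, w i * w j * (X i - X j).det
      = ∑ i, ∑ j, w i * w j * (X i).det + ∑ i, ∑ j, w i * w j * (X j).det
          - ∑ i, ∑ j, w i * w j * mixed i j - ∑ i, ∑ j, w i * w j * mixed j i := by
    simp only [← sum_add_distrib, ← sum_sub_distrib, det_fin_two, mixed, Matrix.sub_apply]
    exact sum_congr rfl fun i _ => sum_congr rfl fun j _ => by ring
  rw [hexpand, hweight, hdet, hswap (fun i _ => (X i).det), hswap mixed]
  ring

theorem sum_smul_mem_of_det_sum_smul_eq {A : Set (Matrix (Fin 2) (Fin 2) ℝ)} {s : ℝ}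
    (hA : A.Pairwise fun X Y => 0 < s * (X - Y).det) {ι : Type*} [Fintype ι] {w : ι → ℝ}
    {X : ι → Matrix (Fin 2) (Fin 2) ℝ} (hw₀ : ∀ i, 0 ≤ w i) (hw₁ : ∑ i, w i = 1)
    (hX : ∀ i, X i ∈ A) (hdet : (∑ i, w i • X i).det = ∑ i, w i * (X i).det) :
    ∑ i, w i • X i ∈ A := by
  have hterm_nonneg : ∀ i j, 0 ≤ s * (w i * w j * (X i - X j).det) := fun i j => by
    by_cases hij : X i = X j
    · simp [hij]
    · have := hA (hX i) (hX j) hij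
      nlinarith [mul_nonneg (hw₀ i) (hw₀ j)]
  have hsum : ∑ i, ∑ j, s * (w i * w j * (X i - X j).det) = 0 := by
    simp only [← Finset.mul_sum, sum_sum_mul_det_sub_fin_two hw₁, hdet, sub_self, mul_zero]
  have hsupport : ∀ i j, w i ≠ 0 → w j ≠ 0 → X i = X j := fun i j hi hj => by
    by_contra hij
    have hrow := (Finset.sum_eq_zero_iff_of_nonneg fun i _ => Finset.sum_nonneg fun j _ =>
      hterm_nonneg i j).mp hsum i (Finset.mem_univ i)
    have hentry := (Finset.sum_eq_zero_iff_of_nonneg fun j _ => hterm_nonneg i j).mp hrow j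
      (Finset.mem_univ j)
    have : w i * w j * (s * (X i - X j).det) = 0 := by linear_combination hentry
    simp [hi, hj, (hA (hX i) (hX j) hij).ne'] at this
  obtain ⟨k, -, hk⟩ := Finset.exists_ne_zero_of_sum_ne_zero (hw₁.trans_ne one_ne_zero)
  have hcollapse : ∑ i, w i • X i = X k := by
    calc ∑ i, w i • X i = ∑ i, w i • X k := Finset.sum_congr rfl fun i _ => by
          by_cases hi : w i = 0
          · simp [hi]
          · rw [hsupport i k hi hk]
      _ = X k := by rw [← Finset.sum_smul, hw₁, one_smul]
  exact hcollapse ▸ hX k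

theorem isPolyconvexSet_of_pairwise_det_sub {A : Set (Matrix (Fin 2) (Fin 2) ℝ)} {s : ℝ}
    (hA : A.Pairwise fun X Y => 0 < s * (X - Y).det) : IsPolyconvexSet A := by
  refine ⟨convexHull ℝ ((fun X => (X, X.det)) '' A), convex_convexHull ℝ _, ?_⟩
  ext Λ
  refine ⟨fun hΛ => subset_convexHull ℝ _ ⟨Λ, hΛ, rfl⟩, fun hΛ => ?_⟩
  obtain ⟨ι, _, w, z, hw₀, hw₁, hz, hΛz⟩ := mem_convexHull_iff_exists_fintype.mp hΛ
  choose X hX hXz using hz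
  have hfst : ∑ i, w i • X i = Λ := by
    simpa [← hXz, Prod.fst_sum] using congrArg Prod.fst hΛz
  have hsnd : ∑ i, w i * (X i).det = Λ.det := by
    simpa [← hXz, Prod.snd_sum] using congrArg Prod.snd hΛz
  rw [← hfst] at hsnd ⊢
  exact sum_smul_mem_of_det_sum_smul_eq hA hw₀ hw₁ hX hsnd.symm

theorem polyconvexHull_eq_self {A : Set (Matrix (Fin 2) (Fin 2) ℝ)} (hA : IsPolyconvexSet A) :
    polyconvexHull A = A := by
  have hA_mem : A ∈ {B | IsPolyconvexSet B ∧ A ⊆ B} := ⟨hA, subset_rfl⟩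
  exact (Set.sInter_subset_of_mem hA_mem).antisymm (Set.subset_sInter fun _ hB => hB.2)

/-- **Polyconvexity of triples with single-signed determinant differences.**
If `C₁, C₂, C₃ ∈ M^{2×2}` are such that either `det(C_k − C_j) < 0` for all `k ≠ j`, or
`det(C_k − C_j) > 0` for all `k ≠ j`, then `{C₁, C₂, C₃}` is polyconvex; equivalently, it
equals its polyconvex hull. -/
theorem isPolyconvexSet_triple_of_signed_det_differences (C : Fin 3 → Matrix (Fin 2) (Fin 2) ℝ)
    (h : (∀ k j, k ≠ j → (C k - C j).det < 0) ∨ (∀ k j, k ≠ j → 0 < (C k - C j).det)) :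
    IsPolyconvexSet {C 0, C 1, C 2} ∧
      polyconvexHull {C 0, C 1, C 2} = {C 0, C 1, C 2} := by
  obtain ⟨s, hs⟩ : ∃ s : ℝ, Pairwise fun k j => 0 < s * (C k - C j).det :=
    h.elim (fun hneg => ⟨-1, fun k j hkj => by linarith [hneg k j hkj]⟩)
      (fun hpos => ⟨1, fun k j hkj => by simpa using hpos k j hkj⟩)
  have hrange : ({C 0, C 1, C 2} : Set _) = Set.range C := by
    ext
    simp [Fin.exists_fin_succ, eq_comm]
  have hpoly : IsPolyconvexSet {C 0, C 1, C 2} := by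
    rw [hrange]
    exact isPolyconvexSet_of_pairwise_det_sub hs.range_pairwise
  exact ⟨hpoly, polyconvexHull_eq_self hpoly⟩
end
end

section
/- The sets 𝔄₁ = {O, diag(−1/2, 1), diag(−2, 2)} and 𝔄₂ = {O, diag(5/2, 1), diag(3, 2)} are both polyconvex subsets of M^{2×2}, where O = diag(0,0). -/
/-!
For a quadratic form `q` and weights `wᵢ ≥ 0` with `∑ wᵢ = 1`,
`∑ᵢ ∑ⱼ wᵢ wⱼ q(xᵢ - xⱼ) = 2 (∑ wᵢ q(xᵢ) - q(∑ wᵢ xᵢ))`. The determinant of `2 × 2` matrices is a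
quadratic form, so if `det (X - Y)` has the same strict sign for all distinct `X, Y ∈ S`, a point
`(Λ, det Λ)` of the convex hull of `{(X, det X) : X ∈ S}` must carry all its weight on a single `X`,
i.e. `Λ = X ∈ S`: such an `S` is polyconvex. The pairwise determinants are `-1/2, -4, -3/2` for
`𝔄₁` and `5/2, 6, 1/2` for `𝔄₂`.
-/

open Matrix

noncomputable section

open Finset

namespace QuadraticMap

variable {R M : Type*} [CommRing R] [AddCommGroup M] [Module R M]

theorem map_sub_eq_sub_polar (Q : QuadraticMap R M R) (x y : M) :
    Q (x - y) = Q x + Q y - polar Q x y := by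
  have := polar_neg_right Q x y
  rw [polar, ← sub_eq_add_neg, Q.map_neg] at this
  linear_combination this

theorem two_mul_map_sum_smul (Q : QuadraticMap R M R) {ι : Type*} (s : Finset ι) (w : ι → R)
    (x : ι → M) :
    2 * Q (∑ i ∈ s, w i • x i) = ∑ i ∈ s, ∑ j ∈ s, w i * w j * polar Q (x i) (x j) := by
  rw [two_mul, ← two_nsmul, ← polar_self, ← polarBilin_apply_apply]
  simp only [map_sum, map_smul, LinearMap.smul_apply, LinearMap.sum_apply,
    polarBilin_apply_apply, smul_eq_mul, mul_sum]
  rw [sum_comm]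
  exact sum_congr rfl fun i _ => sum_congr rfl fun j _ => by ring

theorem sum_sum_mul_map_sub (Q : QuadraticMap R M R) {ι : Type*} (s : Finset ι) (w : ι → R)
    (x : ι → M) :
    ∑ i ∈ s, ∑ j ∈ s, w i * w j * Q (x i - x j) =
      2 * ((∑ i ∈ s, w i) * ∑ i ∈ s, w i * Q (x i) - Q (∑ i ∈ s, w i • x i)) := by
  have hsum :
      ∑ i ∈ s, ∑ j ∈ s, w i * w j * Q (x j) = (∑ i ∈ s, w i) * ∑ i ∈ s, w i * Q (x i) := by
    simp only [sum_mul_sum, mul_assoc]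
  have hsum' :
      ∑ i ∈ s, ∑ j ∈ s, w i * w j * Q (x i) = (∑ i ∈ s, w i) * ∑ i ∈ s, w i * Q (x i) := by
    rw [sum_comm, ← hsum]
    exact sum_congr rfl fun i _ => sum_congr rfl fun j _ => by ring
  rw [mul_sub, two_mul_map_sum_smul]
  simp only [map_sub_eq_sub_polar, mul_sub, mul_add, sum_sub_distrib, sum_add_distrib, hsum,
    hsum']
  ring

end QuadraticMap

section ConvexHullGraph

variable {𝕜 E : Type*} [Field 𝕜] [LinearOrder 𝕜] [IsStrictOrderedRing 𝕜] [AddCommGroup E]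
  [Module 𝕜 E]

theorem QuadraticMap.mem_of_mem_convexHull_graphOn (Q : QuadraticMap 𝕜 E 𝕜) {S : Set E}
    (hS : S.Pairwise fun x y => 0 < Q (x - y)) {x : E}
    (hx : (x, Q x) ∈ convexHull 𝕜 (S.graphOn Q)) : x ∈ S := by
  obtain ⟨ι, _, w, z, hw₀, hw₁, hz, hwz⟩ := mem_convexHull_iff_exists_fintype.1 hx
  choose y hyS hyz using hz
  have hx₁ : ∑ i, w i • y i = x := by simpa [← hyz, Prod.fst_sum] using congrArg Prod.fst hwz
  have hx₂ : ∑ i, w i * Q (y i) = Q x := by simpa [← hyz, Prod.snd_sum] using congrArg Prod.snd hwz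
  have hterm : ∀ i j, 0 ≤ w i * w j * Q (y i - y j) := by
    intro i j
    refine mul_nonneg (mul_nonneg (hw₀ i) (hw₀ j)) ?_
    by_cases h : y i = y j
    · simp [h]
    · exact (hS (hyS i) (hyS j) h).le
  have hzero : ∀ i j, w i * w j * Q (y i - y j) = 0 := by
    have hsum : ∑ i, ∑ j, w i * w j * Q (y i - y j) = 0 := by
      rw [Q.sum_sum_mul_map_sub, hw₁, one_mul, hx₁, hx₂, sub_self, mul_zero]
    rw [sum_eq_zero_iff_of_nonneg fun i _ => sum_nonneg fun j _ => hterm i j] at hsum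
    exact fun i j => (sum_eq_zero_iff_of_nonneg fun j _ => hterm i j).1 (hsum i (mem_univ _)) j
      (mem_univ _)
  obtain ⟨i₀, hi₀⟩ : ∃ i, w i ≠ 0 := by
    by_contra! h
    simp [h] at hw₁
  have hconst : ∀ j, w j • y j = w j • y i₀ := by
    intro j
    by_cases hj : w j = 0
    · simp [hj]
    by_contra hne
    exact (hS (hyS i₀) (hyS j) fun h => hne (by rw [h])).ne'
      (by simpa [hi₀, hj] using hzero i₀ j)
  rw [← hx₁, Fintype.sum_congr _ _ hconst, ← sum_smul, hw₁, one_smul]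
  exact hyS i₀

theorem QuadraticMap.mem_of_mem_convexHull_graphOn_of_pairwise_neg (Q : QuadraticMap 𝕜 E 𝕜)
    {S : Set E}
    (hS : S.Pairwise fun x y => Q (x - y) < 0) {x : E}
    (hx : (x, Q x) ∈ convexHull 𝕜 (S.graphOn Q)) : x ∈ S := by
  let L : E × 𝕜 →ₗ[𝕜] E × 𝕜 := LinearMap.prodMap LinearMap.id (-LinearMap.id)
  have hL : L '' S.graphOn Q = S.graphOn ⇑(-Q) := by
    simp [L, Set.graphOn, Set.image_image]
  refine (-Q).mem_of_mem_convexHull_graphOn (fun a ha b hb hab => ?_) ?_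
  · simpa using hS ha hb hab
  · rw [← hL, ← L.image_convexHull]
    exact ⟨_, hx, by simp [L]⟩

end ConvexHullGraph

namespace Matrix

variable {R : Type*} [CommRing R]

def detQuadraticMap : QuadraticMap R (Matrix (Fin 2) (Fin 2) R) R :=
  LinearMap.BilinMap.toQuadraticMap <|
    LinearMap.mk₂ R (fun X Y => X 0 0 * Y 1 1 - X 0 1 * Y 1 0)
      (fun _ _ _ => by simp only [add_apply]; ring)
      (fun _ _ _ => by simp only [smul_apply, smul_eq_mul]; ring)
      (fun _ _ _ => by simp only [add_apply]; ring)
      (fun _ _ _ => by simp only [smul_apply, smul_eq_mul]; ring)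

@[simp]
theorem coe_detQuadraticMap :
    ⇑(detQuadraticMap : QuadraticMap R (Matrix (Fin 2) (Fin 2) R) R) = det :=
  funext fun X => (det_fin_two X).symm

end Matrix

theorem isPolyconvexSet_of_forall_mem_convexHull_graphOn {S : Set (Matrix (Fin 2) (Fin 2) ℝ)}
    (hS : ∀ X, (X, X.det) ∈ convexHull ℝ (S.graphOn det) → X ∈ S) : IsPolyconvexSet S :=
  ⟨_, convex_convexHull ℝ _, Set.ext fun X =>
    ⟨fun hX => subset_convexHull ℝ _ (Set.mem_graphOn.2 ⟨hX, rfl⟩), hS X⟩⟩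

theorem isPolyconvexSet_of_pairwise_det_sub_pos {S : Set (Matrix (Fin 2) (Fin 2) ℝ)}
    (hS : S.Pairwise fun X Y => 0 < (X - Y).det) : IsPolyconvexSet S :=
  isPolyconvexSet_of_forall_mem_convexHull_graphOn fun X hX =>
    detQuadraticMap.mem_of_mem_convexHull_graphOn (by simpa using hS) (by simpa using hX)

theorem isPolyconvexSet_of_pairwise_det_sub_neg {S : Set (Matrix (Fin 2) (Fin 2) ℝ)}
    (hS : S.Pairwise fun X Y => (X - Y).det < 0) : IsPolyconvexSet S :=
  isPolyconvexSet_of_forall_mem_convexHull_graphOn fun X hX =>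
    detQuadraticMap.mem_of_mem_convexHull_graphOn_of_pairwise_neg (by simpa using hS)
      (by simpa using hX)

/-- The sets `𝔄₁ = {O, diag(−1/2, 1), diag(−2, 2)}` and `𝔄₂ = {O, diag(5/2, 1), diag(3, 2)}`
are both polyconvex subsets of `M^{2×2}`, where `O = diag(0,0)`. -/
theorem isPolyconvexSet_A1_and_A2 :
    IsPolyconvexSet {(0 : Matrix (Fin 2) (Fin 2) ℝ),
      Matrix.diagonal ![-(1 : ℝ)/2, 1], Matrix.diagonal ![(-2 : ℝ), 2]} ∧
    IsPolyconvexSet {(0 : Matrix (Fin 2) (Fin 2) ℝ),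
      Matrix.diagonal ![(5 : ℝ)/2, 1], Matrix.diagonal ![(3 : ℝ), 2]} := by
  refine ⟨isPolyconvexSet_of_pairwise_det_sub_neg ?_, isPolyconvexSet_of_pairwise_det_sub_pos ?_⟩
  all_goals norm_num [Set.pairwise_insert, det_fin_two]
end
end

section
/- Explicit polyconvex hull of the averaged triple: Let O = diag(0,0), B¹ = diag(1,1), B² = diag(1/2, 2) and 𝔅 = {O, B¹, B²} ⊆ M^{2×2}. Then the polyconvex hull of 𝔅 is 𝔅^pc = 𝔅 ∪ { diag(b₁(t), b₂(t)) : t ∈ (0,1) }, where b₁(t) = (−3t + 2 + √(9t² − 4t + 4))/4 and b₂(t) = (3t + 2 + √(9t² − 4t + 4))/4. -/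
/-!
The polyconvex hull of `A` consists of the `Λ` with `(Λ, det Λ)` in the convex hull of
`{(Λ, det Λ) : Λ ∈ A}`. For the triple this lift is `{(0, 0), (B¹, 1), (B², 1)}`, whose convex
hull consists of the points `a • (B¹, 1) + b • (B², 1)` with `a, b ≥ 0`, `a + b ≤ 1`. Such a point
lies over `Λ = diag(a + b/2, a + 2b)`, so the condition is the quadratic
`(a + b/2)(a + 2b) = a + b`. For `b = t` its root `a = (2 − 5t + √(9t² − 4t + 4))/4` gives
`Λ = diag(b₁ t, b₂ t)`, with `t = 0, 1` giving `B¹, B²`; the other root is negative unless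
`a = b = 0`, which gives `O`.
-/

open Matrix Set

noncomputable section

/-- `b₁(t) = (−3t + 2 + √(9t² − 4t + 4))/4`. -/
def b₁ (t : ℝ) : ℝ := (-3 * t + 2 + Real.sqrt (9 * t ^ 2 - 4 * t + 4)) / 4

/-- `b₂(t) = (3t + 2 + √(9t² − 4t + 4))/4`. -/
def b₂ (t : ℝ) : ℝ := (3 * t + 2 + Real.sqrt (9 * t ^ 2 - 4 * t + 4)) / 4


section ConvexHull

variable {𝕜 E : Type*} [Field 𝕜] [LinearOrder 𝕜] [IsStrictOrderedRing 𝕜]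
  [AddCommGroup E] [Module 𝕜 E]

theorem convex_setOf_smul_add_smul (x y : E) :
    Convex 𝕜 {z : E | ∃ a b : 𝕜, 0 ≤ a ∧ 0 ≤ b ∧ a + b ≤ 1 ∧ a • x + b • y = z} := by
  rintro _ ⟨a, b, ha, hb, hab, rfl⟩ _ ⟨a', b', ha', hb', hab', rfl⟩ u v hu hv huv
  refine ⟨u * a + v * a', u * b + v * b', by positivity, by positivity, ?_, by module⟩
  nlinarith [mul_le_mul_of_nonneg_left hab hu, mul_le_mul_of_nonneg_left hab' hv]

theorem mem_convexHull_zero_pair_iff {x y z : E} :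
    z ∈ convexHull 𝕜 {0, x, y} ↔ ∃ a b : 𝕜, 0 ≤ a ∧ 0 ≤ b ∧ a + b ≤ 1 ∧ a • x + b • y = z := by
  constructor
  · refine fun hz ↦ convexHull_min ?_ (convex_setOf_smul_add_smul x y) hz
    rintro _ (rfl | rfl | rfl)
    · exact ⟨0, 0, le_rfl, le_rfl, by simp, by simp⟩
    · exact ⟨1, 0, zero_le_one, le_rfl, by simp, by simp⟩
    · exact ⟨0, 1, le_rfl, zero_le_one, by simp, by simp⟩
  · rintro ⟨a, b, ha, hb, hab, rfl⟩
    refine mem_convexHull_of_exists_fintype ![1 - a - b, a, b] ![0, x, y] ?_ ?_ ?_ ?_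
    · intro i; fin_cases i <;> simp [ha, hb, sub_sub, hab]
    · simp [Fin.sum_univ_three]; ring
    · intro i; fin_cases i <;> simp
    · simp [Fin.sum_univ_three]

end ConvexHull

theorem polyconvexHull_eq_setOf_mem_convexHull (A : Set (Matrix (Fin 2) (Fin 2) ℝ)) :
    polyconvexHull A = {Λ | (Λ, Λ.det) ∈ convexHull ℝ ((fun Λ ↦ (Λ, Λ.det)) '' A)} := by
  refine Subset.antisymm (sInter_subset_of_mem ⟨⟨_, convex_convexHull ℝ _, rfl⟩, ?_⟩) ?_
  · exact fun Λ hΛ ↦ subset_convexHull ℝ _ (mem_image_of_mem _ hΛ)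
  · rintro Λ hΛ B ⟨⟨C, hC, rfl⟩, hAB⟩
    exact convexHull_min (image_subset_iff.2 hAB) hC hΛ

theorem smul_diagonal_add_smul_diagonal (a b : ℝ) :
    a • diagonal ![(1 : ℝ), 1] + b • diagonal ![(1 : ℝ) / 2, 2] =
      diagonal ![a + b / 2, a + 2 * b] := by
  rw [← diagonal_smul, ← diagonal_smul, diagonal_add]
  congr 1
  ext i; fin_cases i <;> simp <;> ring

theorem det_diagonal_pair (x y : ℝ) : (diagonal ![x, y]).det = x * y := by
  simp [det_diagonal, Fin.prod_univ_two]

theorem mem_polyconvexHull_triple_iff {Λ : Matrix (Fin 2) (Fin 2) ℝ} :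
    Λ ∈ polyconvexHull {0, diagonal ![(1 : ℝ), 1], diagonal ![(1 : ℝ) / 2, 2]} ↔
      ∃ a b : ℝ, 0 ≤ a ∧ 0 ≤ b ∧ a + b ≤ 1 ∧ (a + b / 2) * (a + 2 * b) = a + b ∧
        Λ = diagonal ![a + b / 2, a + 2 * b] := by
  have hB₂ : ((1 : ℝ) / 2) * 2 = 1 := by norm_num
  rw [polyconvexHull_eq_setOf_mem_convexHull, mem_ofPred_eq, image_insert_eq, image_pair,
    det_zero, det_diagonal_pair, det_diagonal_pair, hB₂, mul_one, Prod.mk_zero_zero,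
    mem_convexHull_zero_pair_iff]
  refine exists₂_congr fun a b ↦ ?_
  simp only [Prod.smul_mk, Prod.mk_add_mk, Prod.ext_iff, smul_diagonal_add_smul_diagonal]
  constructor
  · rintro ⟨ha, hb, hab, rfl, hdet⟩
    exact ⟨ha, hb, hab, by simpa [det_diagonal_pair] using hdet.symm, rfl⟩
  · rintro ⟨ha, hb, hab, hdet, rfl⟩
    exact ⟨ha, hb, hab, rfl, by simpa [det_diagonal_pair] using hdet.symm⟩

def curveWeight (t : ℝ) : ℝ := (2 - 5 * t + √(9 * t ^ 2 - 4 * t + 4)) / 4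

theorem sq_sqrt_discr (t : ℝ) : √(9 * t ^ 2 - 4 * t + 4) ^ 2 = 9 * t ^ 2 - 4 * t + 4 :=
  Real.sq_sqrt (by nlinarith [sq_nonneg (3 * t - 2 / 3)])

theorem b₁_eq_curveWeight (t : ℝ) : b₁ t = curveWeight t + t / 2 := by
  unfold b₁ curveWeight; ring

theorem b₂_eq_curveWeight (t : ℝ) : b₂ t = curveWeight t + 2 * t := by
  unfold b₂ curveWeight; ring

theorem curveWeight_mul_eq (t : ℝ) :
    (curveWeight t + t / 2) * (curveWeight t + 2 * t) = curveWeight t + t := by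
  unfold curveWeight; linear_combination (1 / 16 : ℝ) * sq_sqrt_discr t

theorem curveWeight_nonneg {t : ℝ} (ht₀ : 0 ≤ t) (ht₁ : t ≤ 1) : 0 ≤ curveWeight t := by
  unfold curveWeight
  nlinarith [sq_sqrt_discr t, Real.sqrt_nonneg (9 * t ^ 2 - 4 * t + 4)]

theorem curveWeight_add_le_one {t : ℝ} (ht₀ : 0 ≤ t) (ht₁ : t ≤ 1) : curveWeight t + t ≤ 1 := by
  unfold curveWeight
  nlinarith [sq_sqrt_discr t, Real.sqrt_nonneg (9 * t ^ 2 - 4 * t + 4)]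

theorem eq_curveWeight_of_mul_eq {a b : ℝ} (ha : 0 ≤ a) (hb : 0 ≤ b) (hab : a + b ≤ 1)
    (h : (a + b / 2) * (a + 2 * b) = a + b) : (a = 0 ∧ b = 0) ∨ a = curveWeight b := by
  set s := √(9 * b ^ 2 - 4 * b + 4) with hs
  have hs₀ : 0 ≤ s := Real.sqrt_nonneg _
  have hroots : (a - curveWeight b) * (a - (2 - 5 * b - s) / 4) = 0 := by
    unfold curveWeight; rw [← hs]; linear_combination h - (1 / 16 : ℝ) * sq_sqrt_discr b
  rcases mul_eq_zero.1 hroots with h₁ | h₂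
  · exact Or.inr (sub_eq_zero.1 h₁)
  · left
    have hb₀ : b = 0 := by nlinarith [sq_sqrt_discr b]
    subst hb₀
    constructor <;> nlinarith [sq_sqrt_discr 0]

theorem polyconvexHull_triple_eq_insert_image_Icc :
    polyconvexHull {0, diagonal ![(1 : ℝ), 1], diagonal ![(1 : ℝ) / 2, 2]} =
      insert 0 ((fun t ↦ diagonal ![b₁ t, b₂ t]) '' Icc 0 1) := by
  ext Λ
  rw [mem_polyconvexHull_triple_iff]
  constructor
  · rintro ⟨a, b, ha, hb, hab, hdet, rfl⟩
    rcases eq_curveWeight_of_mul_eq ha hb hab hdet with ⟨rfl, rfl⟩ | rfl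
    · left; simp [← diagonal_zero]
    · right
      refine ⟨b, ⟨hb, by linarith⟩, ?_⟩
      simp only [b₁_eq_curveWeight, b₂_eq_curveWeight]
  · rintro (rfl | ⟨t, ⟨ht₀, ht₁⟩, rfl⟩)
    · exact ⟨0, 0, le_rfl, le_rfl, by norm_num, by norm_num, by simp [← diagonal_zero]⟩
    · refine ⟨curveWeight t, t, curveWeight_nonneg ht₀ ht₁, ht₀, curveWeight_add_le_one ht₀ ht₁,
        curveWeight_mul_eq t, ?_⟩
      simp only [b₁_eq_curveWeight, b₂_eq_curveWeight]

theorem b₁_zero : b₁ 0 = 1 := by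
  norm_num [b₁, show (4 : ℝ) = 2 ^ 2 by norm_num]

theorem b₂_zero : b₂ 0 = 1 := by
  norm_num [b₂, show (4 : ℝ) = 2 ^ 2 by norm_num]

theorem b₁_one : b₁ 1 = 1 / 2 := by
  norm_num [b₁, show (9 : ℝ) = 3 ^ 2 by norm_num]

theorem b₂_one : b₂ 1 = 2 := by
  norm_num [b₂, show (9 : ℝ) = 3 ^ 2 by norm_num]

/-- **Explicit polyconvex hull of the averaged triple.**
Let `O = diag(0,0)`, `B¹ = diag(1,1)`, `B² = diag(1/2, 2)` and `𝔅 = {O, B¹, B²}`. Then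
`𝔅^pc = 𝔅 ∪ {diag(b₁(t), b₂(t)) : t ∈ (0,1)}`. -/
theorem polyconvexHull_averaged_triple :
    polyconvexHull {(0 : Matrix (Fin 2) (Fin 2) ℝ),
        Matrix.diagonal ![(1 : ℝ), 1], Matrix.diagonal ![(1 : ℝ)/2, 2]} =
      {(0 : Matrix (Fin 2) (Fin 2) ℝ),
        Matrix.diagonal ![(1 : ℝ), 1], Matrix.diagonal ![(1 : ℝ)/2, 2]} ∪
      {M : Matrix (Fin 2) (Fin 2) ℝ | ∃ t ∈ Set.Ioo (0 : ℝ) 1,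
        M = Matrix.diagonal ![b₁ t, b₂ t]} := by
  rw [polyconvexHull_triple_eq_insert_image_Icc, ← Ico_insert_right zero_le_one,
    ← Ioo_insert_left zero_lt_one, image_insert_eq, image_insert_eq, b₁_zero, b₂_zero, b₁_one,
    b₂_one]
  ext Λ
  simp only [mem_insert_iff, mem_union, mem_singleton_iff, mem_image, mem_ofPred_eq, eq_comm]
  tauto
end
end
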